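/- Let (V,h,J₋) be a pseudo-Hermitian vector space of dimension n ≥ 6 with a basis where h is the standard (possibly indefinite) diagonal form and J₋e_{2i-1}=e_{2i}. Let ψ₀ := e¹⊗e² - e²⊗e¹ + δ(e³⊗e⁴ - e⁴⊗e³) with δ chosen so that ψ₀ is orthogonal to the Kähler form Ω, and let σ be as in Higa's construction. Then σ(ψ₀)(e₅,e₁,e₂,e₅) = -h₅₅ ≠ 0 while σ(ψ₀)(e₅,e₁,J₋e₂,J₋e₅) = 0; in particular σ(ψ₀) fails the Kähler identity. -/

import Mathlib

/-- Let `(V,h,J)` be a pseudo-Hermitian vector space of dimension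
`n ≥ 6` with a basis `b` in which `h` is diagonal with entries `±1` and
`J b_{2k} = b_{2k+1}`, `J b_{2k+1} = -b_{2k}` (0-indexed).  Let
`ψ₀ = e¹⊗e² - e²⊗e¹ + δ(e³⊗e⁴ - e⁴⊗e³)` with `δ` chosen so that `ψ₀ ⊥ Ω`, where
`Ω(x,y) = h(x,Jy)`.  Then `σ(ψ₀)(e₅,e₁,e₂,e₅) = -h₅₅ ≠ 0` while
`σ(ψ₀)(e₅,e₁,Je₂,Je₅) = 0`; in particular `σ(ψ₀)` fails the Kähler identity. -/
theorem stmt17 (V : Type*) [AddCommGroup V] [Module ℝ V]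
    (n : ℕ) (hn : 6 ≤ n)
    (h : LinearMap.BilinForm ℝ V) (hsymm : h.IsSymm) (hnd : h.Nondegenerate)
    (b : Module.Basis (Fin n) ℝ V)
    (hdiag : ∀ i j, i ≠ j → h (b i) (b j) = 0)
    (hunit : ∀ i, h (b i) (b i) = 1 ∨ h (b i) (b i) = -1)
    (J : V →ₗ[ℝ] V) (hJ2 : ∀ x, J (J x) = -x)
    (hJh : ∀ x y, h (J x) (J y) = h x y)
    (hJb : ∀ (k : ℕ) (hk : 2 * k + 1 < n),
      J (b ⟨2 * k, by omega⟩) = b ⟨2 * k + 1, hk⟩ ∧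
      J (b ⟨2 * k + 1, hk⟩) = -(b ⟨2 * k, by omega⟩))
    (Ω : V → V → ℝ) (hΩ : ∀ x y, Ω x y = h x (J y))
    (δ : ℝ) (ψ₀ : V → V → ℝ)
    (hψ₀ : ∀ x y, ψ₀ x y
      = b.coord ⟨0, by omega⟩ x * b.coord ⟨1, by omega⟩ y
        - b.coord ⟨1, by omega⟩ x * b.coord ⟨0, by omega⟩ y
        + δ * (b.coord ⟨2, by omega⟩ x * b.coord ⟨3, by omega⟩ y
          - b.coord ⟨3, by omega⟩ x * b.coord ⟨2, by omega⟩ y))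
    (hperp : ∑ i : Fin n, ∑ j : Fin n,
      (h (b i) (b i))⁻¹ * (h (b j) (b j))⁻¹ * ψ₀ (b i) (b j) * Ω (b i) (b j) = 0)
    (σψ : V → V → V → V → ℝ)
    (hσ : ∀ x y z w, σψ x y z w
      = 2 * ψ₀ x y * h z w + ψ₀ x z * h y w - ψ₀ y z * h x w
        - ψ₀ x w * h y z + ψ₀ y w * h x z) :
    σψ (b ⟨4, by omega⟩) (b ⟨0, by omega⟩) (b ⟨1, by omega⟩) (b ⟨4, by omega⟩)
        = -(h (b ⟨4, by omega⟩) (b ⟨4, by omega⟩)) ∧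
    h (b ⟨4, by omega⟩) (b ⟨4, by omega⟩) ≠ 0 ∧
    σψ (b ⟨4, by omega⟩) (b ⟨0, by omega⟩) (J (b ⟨1, by omega⟩))
        (J (b ⟨4, by omega⟩)) = 0 ∧
    ¬(∀ x y z w, σψ x y z w = σψ x y (J z) (J w)) := by
  have hcoord : ∀ i j : Fin n, b.coord i (b j) = if j = i then 1 else 0 := by
    intro i j
    simp [Module.Basis.coord_apply, Finsupp.single_apply]
  have hJ01 := hJb 0 (by omega)
  have hJ45 := hJb 2 (by omega)
  have hJ1 : J (b ⟨1, by omega⟩) = -(b ⟨0, by omega⟩) := hJ01.2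
  have hJ4 : J (b ⟨4, by omega⟩) = b ⟨5, by omega⟩ := hJ45.1
  have hψb : ∀ i j : Fin n, ψ₀ (b i) (b j)
      = (if i = ⟨0, by omega⟩ then 1 else 0) * (if j = ⟨1, by omega⟩ then 1 else 0)
        - (if i = ⟨1, by omega⟩ then 1 else 0) * (if j = ⟨0, by omega⟩ then 1 else 0)
        + δ * ((if i = ⟨2, by omega⟩ then 1 else 0) * (if j = ⟨3, by omega⟩ then 1 else 0)
          - (if i = ⟨3, by omega⟩ then 1 else 0) * (if j = ⟨2, by omega⟩ then 1 else 0)) := by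
    intro i j
    rw [hψ₀]
    simp [hcoord]
  have h44 : h (b ⟨4, by omega⟩) (b ⟨4, by omega⟩) ≠ 0 := by
    rcases hunit ⟨4, by omega⟩ with h1 | h1 <;> rw [h1] <;> norm_num
  have hmain : σψ (b ⟨4, by omega⟩) (b ⟨0, by omega⟩) (b ⟨1, by omega⟩) (b ⟨4, by omega⟩)
      = -(h (b ⟨4, by omega⟩) (b ⟨4, by omega⟩)) := by
    rw [hσ, hψb, hψb, hψb, hψb, hψb]
    rw [hdiag ⟨1, by omega⟩ ⟨4, by omega⟩ (by simp [Fin.ext_iff]),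
      hdiag ⟨0, by omega⟩ ⟨4, by omega⟩ (by simp [Fin.ext_iff]),
      hdiag ⟨0, by omega⟩ ⟨1, by omega⟩ (by simp [Fin.ext_iff]),
      hdiag ⟨4, by omega⟩ ⟨1, by omega⟩ (by simp [Fin.ext_iff])]
    simp [Fin.ext_iff]
  have hzero : σψ (b ⟨4, by omega⟩) (b ⟨0, by omega⟩) (J (b ⟨1, by omega⟩))
      (J (b ⟨4, by omega⟩)) = 0 := by
    rw [hJ1, hJ4, hσ]
    have hψneg : ∀ x : V, ∀ i j : Fin n, ψ₀ x (-(b i)) = -ψ₀ x (b j) + ψ₀ x (b j) - ψ₀ x (b i) := by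
      intro x i j; ring_nf
      rw [hψ₀, hψ₀]
      simp
      ring
    have hψn : ∀ i j : Fin n, ψ₀ (b i) (-(b j)) = -ψ₀ (b i) (b j) := by
      intro i j
      rw [hψ₀, hψ₀]
      simp
      ring
    rw [hψn, hψn]
    simp [hψb, Fin.ext_iff, map_neg]
  refine ⟨hmain, h44, hzero, fun hall => ?_⟩
  have := hall (b ⟨4, by omega⟩) (b ⟨0, by omega⟩) (b ⟨1, by omega⟩) (b ⟨4, by omega⟩)
  rw [hmain, hzero] at this
  exact h44 (by linarith)
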